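/- For every read-once expression tree T over the variables Fin n, the value of every subtree of T (in the field K of rational functions) does not lie in the constant subfield (the image of ℚ); in particular the value of every subtree is nonzero, so every division performed in the recursive evaluation of T is division by a nonzero element of K. -/

import Mathlib

/-- The four binary arithmetic operations labeling internal nodes. -/
inductive Op : Type
  | add | sub | mul | div
deriving DecidableEq, Repr

/-- An expression tree over variables `Fin n`: a full binary tree whose leaves
are labeled by variables and whose internal nodes carry an operation. -/
inductive ETree (n : ℕ) : Type
  | leaf (v : Fin n)
  | node (op : Op) (l r : ETree n)
deriving DecidableEq

/-- The field of rational functions in `n` variables over `ℚ`. -/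
abbrev K (n : ℕ) := FractionRing (MvPolynomial (Fin n) ℚ)

/-- The list of variables labeling the leaves, from left to right. -/
def leafList {n : ℕ} : ETree n → List (Fin n)
  | .leaf v => [v]
  | .node _ l r => leafList l ++ leafList r

/-- A tree is read-once (a *valid* expression) if each variable labels at most one leaf. -/
def ReadOnce {n : ℕ} (T : ETree n) : Prop := (leafList T).Nodup

/-- The set of variables labeling leaves of a tree. -/
def leafVars {n : ℕ} (T : ETree n) : Finset (Fin n) := (leafList T).toFinset

/-- The value of an expression tree in the field of rational functions. -/
noncomputable def val {n : ℕ} : ETree n → K n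
  | .leaf v => algebraMap (MvPolynomial (Fin n) ℚ) (K n) (MvPolynomial.X v)
  | .node .add l r => val l + val r
  | .node .sub l r => val l - val r
  | .node .mul l r => val l * val r
  | .node .div l r => val l / val r

/-- `IsSubtree t T` means `t` is a subtree of `T` (possibly `T` itself). -/
inductive IsSubtree {n : ℕ} : ETree n → ETree n → Prop
  | refl (T : ETree n) : IsSubtree T T
  | left {t l r : ETree n} {op : Op} : IsSubtree t l → IsSubtree t (.node op l r)
  | right {t l r : ETree n} {op : Op} : IsSubtree t r → IsSubtree t (.node op l r)

set_option maxHeartbeats 1000000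
set_option synthInstance.maxHeartbeats 400000

open MvPolynomial TrivSqZeroExt

noncomputable section

abbrev A (n : ℕ) := MvPolynomial (Fin n) ℚ

lemma K_smul_eq (n : ℕ) (a : ℚ) (x : K n) :
    @HSMul.hSMul _ _ _ (@instHSMul _ _ OreLocalization.instSMulOfIsScalarTower) a x =
      (algebraMap ℚ (K n) a) * x := by
  have := @Algebra.smul_def ℚ (K n) _ _ OreLocalization.instAlgebra a x
  rw [this]; congr 1
  exact congrFun (congrArg DFunLike.coe (Subsingleton.elim (α := ℚ →+* K n) _ _)) a

instance K_isScalarTower (n : ℕ) :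
    @IsScalarTower ℚ (K n) (K n) Algebra.toSMul instSMulOfMul
      OreLocalization.instSMulOfIsScalarTower := by
  refine @IsScalarTower.mk ℚ (K n) (K n) Algebra.toSMul instSMulOfMul
    OreLocalization.instSMulOfIsScalarTower (fun a b c => ?_)
  rw [K_smul_eq, smul_eq_mul, Algebra.smul_def]
  simp only [smul_eq_mul]
  ring

instance K_isScalarTower_op (n : ℕ) :
    IsScalarTower ℚ (K n)ᵐᵒᵖ (K n) := ⟨fun a b c => by
      rw [MulOpposite.smul_eq_mul_unop, MulOpposite.smul_eq_mul_unop, MulOpposite.unop_smul,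
        K_smul_eq, K_smul_eq]
      ring⟩

def Phi {n : ℕ} (v : Fin n) : A n →ₐ[ℚ] DualNumber (K n) :=
  MvPolynomial.aeval fun w =>
    TrivSqZeroExt.inl (algebraMap (A n) (K n) (MvPolynomial.X w)) +
      TrivSqZeroExt.inr (if w = v then 1 else 0)

lemma Phi_X {n : ℕ} (v w : Fin n) :
    Phi v (X w) = TrivSqZeroExt.inl (algebraMap (A n) (K n) (MvPolynomial.X w)) +
      TrivSqZeroExt.inr (if w = v then 1 else 0) := by
  simp [Phi]

lemma Phi_apply {n : ℕ} (v : Fin n) (p : A n) :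
    Phi v p = TrivSqZeroExt.inl (algebraMap (A n) (K n) p) +
      TrivSqZeroExt.inr (algebraMap (A n) (K n) (MvPolynomial.pderiv v p)) := by
  induction p using MvPolynomial.induction_on with
  | C a =>
      have h1 : (Phi v) (C a) = algebraMap ℚ (DualNumber (K n)) a := by
        simp [Phi, MvPolynomial.algebraMap_eq]
      have h2 : algebraMap (A n) (K n) (C a) = algebraMap ℚ (K n) a := by
        rw [← MvPolynomial.algebraMap_eq, ← IsScalarTower.algebraMap_apply]
      rw [h1, h2, pderiv_C, map_zero, inr_zero, add_zero, algebraMap_eq_inl']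
  | add p q hp hq =>
      rw [map_add, hp, hq, map_add (algebraMap (A n) (K n)), map_add, map_add, inl_add, inr_add]
      abel
  | mul_X p w hp =>
      rw [map_mul, hp, Phi_X]
      rw [add_mul, mul_add, mul_add, inl_mul_inl, inl_mul_inr, inr_mul_inl, inr_mul_inr]
      rw [map_mul, pderiv_mul, map_add, map_mul, map_mul, inr_add]
      rcases eq_or_ne w v with h | h
      · simp only [h, if_pos rfl, pderiv_X_self, map_one, mul_one, smul_eq_mul,
          MulOpposite.smul_eq_mul_unop, MulOpposite.unop_op]
        rw [if_pos trivial, mul_one]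
        abel
      · simp only [if_neg h, pderiv_X_of_ne h, map_zero, smul_zero, inr_zero, add_zero,
          smul_eq_mul, MulOpposite.smul_eq_mul_unop, MulOpposite.unop_op, zero_add, mul_zero]

lemma Phi_isUnit {n : ℕ} (v : Fin n) {q : A n} (hq : q ≠ 0) : IsUnit (Phi v q) := by
  rw [isUnit_iff_isUnit_fst, Phi_apply]
  simp only [fst_add, fst_inl, fst_inr, add_zero]
  rw [isUnit_iff_ne_zero]
  exact fun h => hq (IsFractionRing.injective (A n) (K n) (by simpa using h))

def Psi {n : ℕ} (v : Fin n) : K n →+* DualNumber (K n) :=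
  IsLocalization.lift (M := nonZeroDivisors (A n)) (g := (Phi v).toRingHom)
    (fun y => Phi_isUnit v (nonZeroDivisors.ne_zero y.2))

lemma Psi_algebraMap {n : ℕ} (v : Fin n) (p : A n) :
    Psi v (algebraMap (A n) (K n) p) = Phi v p :=
  IsLocalization.lift_eq _ p

lemma Psi_fst {n : ℕ} (v : Fin n) (x : K n) : fst (Psi v x) = x := by
  have h : ((TrivSqZeroExt.fstHom ℚ (K n) (K n)).toRingHom.comp (Psi v)) =
      RingHom.id (K n) := by
    apply IsLocalization.ringHom_ext (nonZeroDivisors (A n))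
    have key : ∀ q : A n, fst (Psi v (algebraMap (A n) (K n) q)) = algebraMap (A n) (K n) q := by
      intro q; rw [Psi_algebraMap, Phi_apply]; simp
    ext p
    · exact key _
    · exact key _
  exact RingHom.congr_fun h x

def D {n : ℕ} (v : Fin n) (x : K n) : K n := snd (Psi v x)

lemma D_zero {n : ℕ} (v : Fin n) : D v (0 : K n) = 0 := by simp [D]

lemma D_add {n : ℕ} (v : Fin n) (x y : K n) : D v (x + y) = D v x + D v y := by
  simp [D, map_add]

lemma D_sub {n : ℕ} (v : Fin n) (x y : K n) : D v (x - y) = D v x - D v y := by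
  simp [D, map_sub]

lemma D_mul {n : ℕ} (v : Fin n) (x y : K n) : D v (x * y) = x * D v y + y * D v x := by
  simp only [D, map_mul, snd_mul, Psi_fst, smul_eq_mul, MulOpposite.smul_eq_mul_unop,
    MulOpposite.unop_op]
  ring

lemma D_algebraMap {n : ℕ} (v : Fin n) (p : A n) :
    D v (algebraMap (A n) (K n) p) = algebraMap (A n) (K n) (MvPolynomial.pderiv v p) := by
  simp only [D, Psi_algebraMap, Phi_apply, snd_add, snd_inl, snd_inr, zero_add]

lemma D_ratAlgebraMap {n : ℕ} (v : Fin n) (c : ℚ) :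
    D v (algebraMap ℚ (K n) c) = 0 := by
  rw [IsScalarTower.algebraMap_apply ℚ (A n) (K n), D_algebraMap]
  simp [MvPolynomial.algebraMap_eq]







lemma leafVars_node {n : ℕ} (op : Op) (l r : ETree n) :
    leafVars (.node op l r) = leafVars l ∪ leafVars r := by
  simp [leafVars, leafList]

lemma leafVars_nonempty {n : ℕ} (T : ETree n) : (leafVars T).Nonempty := by
  induction T with
  | leaf v => exact ⟨v, by simp [leafVars, leafList]⟩
  | node op l r ihl ihr => rw [leafVars_node]; exact ihl.mono Finset.subset_union_left

lemma readOnce_node {n : ℕ} {op : Op} {l r : ETree n} (h : ReadOnce (.node op l r)) :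
    ReadOnce l ∧ ReadOnce r ∧ ∀ v, v ∈ leafVars l → v ∉ leafVars r := by
  unfold ReadOnce leafList at h
  rw [List.nodup_append] at h
  refine ⟨h.1, h.2.1, fun v hl hr => ?_⟩
  exact h.2.2 v (by simpa [leafVars] using hl) v (by simpa [leafVars] using hr) rfl

lemma main {n : ℕ} (T : ETree n) (hT : ReadOnce T) :
    ∀ v : Fin n, (v ∈ leafVars T → D v (val T) ≠ 0) ∧ (v ∉ leafVars T → D v (val T) = 0) := by
  induction T with
  | leaf w =>
    intro v
    constructor
    · intro hv
      have hvw : v = w := by simpa [leafVars, leafList] using hv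
      subst hvw
      rw [show val (.leaf v) = algebraMap (A n) (K n) (X v) from rfl, D_algebraMap]
      simp
    · intro hv
      have hvw : v ≠ w := by simpa [leafVars, leafList] using hv
      rw [show val (.leaf w) = algebraMap (A n) (K n) (X w) from rfl, D_algebraMap]
      rw [pderiv_X_of_ne (Ne.symm hvw), map_zero]
  | node op l r ihl ihr =>
    obtain ⟨hl, hr, hdisj⟩ := readOnce_node hT
    have IHl := ihl hl
    have IHr := ihr hr
    have ha : val l ≠ 0 := by
      obtain ⟨w, hw⟩ := leafVars_nonempty l
      intro h0; exact (IHl w).1 hw (by rw [h0, D_zero])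
    have hb : val r ≠ 0 := by
      obtain ⟨w, hw⟩ := leafVars_nonempty r
      intro h0; exact (IHr w).1 hw (by rw [h0, D_zero])
    have hdisj' : ∀ v, v ∈ leafVars r → v ∉ leafVars l := fun v h hc => hdisj v hc h
    intro v
    rw [leafVars_node, Finset.mem_union]
    -- key identity for div
    have hdiv : D v (val l) = val l / val r * D v (val r) + val r * D v (val l / val r) := by
      conv_lhs => rw [← div_mul_cancel₀ (val l) hb]
      exact D_mul v _ _
    constructor
    · intro hv
      cases op with
      | add =>
        rw [show val (.node .add l r) = val l + val r from rfl, D_add]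
        rcases hv with h | h
        · rw [(IHr v).2 (hdisj v h), add_zero]; exact (IHl v).1 h
        · rw [(IHl v).2 (hdisj' v h), zero_add]; exact (IHr v).1 h
      | sub =>
        rw [show val (.node .sub l r) = val l - val r from rfl, D_sub]
        rcases hv with h | h
        · rw [(IHr v).2 (hdisj v h), sub_zero]; exact (IHl v).1 h
        · rw [(IHl v).2 (hdisj' v h), zero_sub, neg_ne_zero]; exact (IHr v).1 h
      | mul =>
        rw [show val (.node .mul l r) = val l * val r from rfl, D_mul]
        rcases hv with h | h
        · rw [(IHr v).2 (hdisj v h), mul_zero, zero_add]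
          exact mul_ne_zero hb ((IHl v).1 h)
        · rw [(IHl v).2 (hdisj' v h), mul_zero, add_zero]
          exact mul_ne_zero ha ((IHr v).1 h)
      | div =>
        rw [show val (.node .div l r) = val l / val r from rfl]
        rcases hv with h | h
        · rw [(IHr v).2 (hdisj v h), mul_zero, zero_add] at hdiv
          intro h0; rw [h0, mul_zero] at hdiv
          exact (IHl v).1 h hdiv
        · rw [(IHl v).2 (hdisj' v h)] at hdiv
          intro h0; rw [h0, mul_zero, add_zero] at hdiv
          exact (IHr v).1 h
            ((mul_eq_zero.mp hdiv.symm).resolve_left (div_ne_zero ha hb))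
    · intro hv
      push_neg at hv
      have hDl : D v (val l) = 0 := (IHl v).2 hv.1
      have hDr : D v (val r) = 0 := (IHr v).2 hv.2
      cases op with
      | add => rw [show val (.node .add l r) = val l + val r from rfl, D_add, hDl, hDr, add_zero]
      | sub => rw [show val (.node .sub l r) = val l - val r from rfl, D_sub, hDl, hDr, sub_zero]
      | mul =>
        rw [show val (.node .mul l r) = val l * val r from rfl, D_mul, hDl, hDr]
        ring
      | div =>
        rw [show val (.node .div l r) = val l / val r from rfl]
        rw [hDl, hDr, mul_zero, zero_add] at hdiv
        exact (mul_eq_zero.mp hdiv.symm).resolve_left hb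

lemma readOnce_subtree {n : ℕ} {t T : ETree n} (h : IsSubtree t T) (hT : ReadOnce T) :
    ReadOnce t := by
  induction h with
  | refl => exact hT
  | left h ih => exact ih (readOnce_node hT).1
  | right h ih => exact ih (readOnce_node hT).2.1

lemma subtree_right_div {n : ℕ} {l r T : ETree n} (h : IsSubtree (.node Op.div l r) T) :
    IsSubtree r T := by
  induction h with
  | refl => exact .right (.refl r)
  | left h ih => exact .left ih
  | right h ih => exact .right ih

end

/-- For every read-once expression tree `T`, the value of every subtree of `T` does not
lie in the constant subfield (the image of `ℚ`); in particular it is nonzero, so every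
division performed in the evaluation of `T` is division by a nonzero element. -/
theorem subtree_value_not_constant (n : ℕ) (T : ETree n) (hT : ReadOnce T) :
    (∀ t : ETree n, IsSubtree t T →
      val t ∉ Set.range (algebraMap ℚ (K n)) ∧ val t ≠ 0) ∧
    (∀ l r : ETree n, IsSubtree (ETree.node Op.div l r) T → val r ≠ 0) := by
  have part1 : ∀ t : ETree n, IsSubtree t T →
      val t ∉ Set.range (algebraMap ℚ (K n)) ∧ val t ≠ 0 := by
    intro t ht
    have hro := readOnce_subtree ht hT
    have hmain := main t hro
    obtain ⟨w, hw⟩ := leafVars_nonempty t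
    have hne : val t ≠ 0 := fun h0 => (hmain w).1 hw (by rw [h0, D_zero])
    refine ⟨?_, hne⟩
    rintro ⟨c, hc⟩
    exact (hmain w).1 hw (by rw [← hc, D_ratAlgebraMap])
  exact ⟨part1, fun l r ht => (part1 r (subtree_right_div ht)).2⟩
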